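/- Two eigenvectors of a Hermitian dual complex matrix A, associated to eigenvalues λ = λ_st + λ_I ε and μ = μ_st + μ_I ε with λ_st ≠ μ_st, are orthogonal: x* y = 0. -/

import Mathlib

open TrivSqZeroExt Matrix

/-- Conjugate of a dual complex number: componentwise complex conjugation. -/
noncomputable def dcConj (q : DualNumber ℂ) : DualNumber ℂ :=
  (starRingEnd ℂ q.fst, starRingEnd ℂ q.snd)

/-- Conjugate transpose of a dual complex matrix. -/
noncomputable def dcCT {m n : Type*} (A : Matrix m n (DualNumber ℂ)) :
    Matrix n m (DualNumber ℂ) :=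
  fun i j => dcConj (A j i)

lemma dcConj_fst (q : DualNumber ℂ) : (dcConj q).fst = starRingEnd ℂ q.fst := rfl

lemma dcConj_snd (q : DualNumber ℂ) : (dcConj q).snd = starRingEnd ℂ q.snd := rfl

lemma dcConj_mul (p q : DualNumber ℂ) : dcConj (p * q) = dcConj p * dcConj q := by
  ext <;> simp [dcConj_fst, dcConj_snd, fst_mul, snd_mul, mul_comm]

lemma dcConj_dcConj (p : DualNumber ℂ) : dcConj (dcConj p) = p := by
  ext <;> simp [dcConj]

lemma key_swap {n : ℕ} (A : Matrix (Fin n) (Fin n) (DualNumber ℂ)) (hA : dcCT A = A)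
    (lam mu : DualNumber ℂ) (x y : Fin n → DualNumber ℂ)
    (hlx : A *ᵥ x = lam • x) (hmy : A *ᵥ y = mu • y) :
    dcConj lam * (∑ i, dcConj (x i) * y i) = mu * (∑ i, dcConj (x i) * y i) := by
  have hAij : ∀ i j, A i j = dcConj (A j i) := by
    intro i j
    rw [← congrFun (congrFun hA i) j]; rfl
  have h1 : mu * (∑ i, dcConj (x i) * y i) = ∑ i, ∑ j, dcConj (x i) * (A i j * y j) := by
    rw [Finset.mul_sum]
    refine Finset.sum_congr rfl fun i _ => ?_
    have : (A *ᵥ y) i = mu * y i := by rw [hmy]; simp [mul_comm]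
    calc mu * (dcConj (x i) * y i) = dcConj (x i) * (mu * y i) := by ring
      _ = dcConj (x i) * (A *ᵥ y) i := by rw [this]
      _ = ∑ j, dcConj (x i) * (A i j * y j) := by
          rw [mulVec, dotProduct, Finset.mul_sum]
  have h2 : dcConj lam * (∑ j, dcConj (x j) * y j)
      = ∑ j, ∑ i, dcConj (x i) * (A i j * y j) := by
    rw [Finset.mul_sum]
    refine Finset.sum_congr rfl fun j _ => ?_
    have hAx : (A *ᵥ x) j = lam * x j := by rw [hlx]; simp [mul_comm]
    calc dcConj lam * (dcConj (x j) * y j) = dcConj (lam * x j) * y j := by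
          rw [dcConj_mul]; ring
      _ = dcConj ((A *ᵥ x) j) * y j := by rw [hAx]
      _ = (∑ i, dcConj (A j i * x i)) * y j := by
          rw [mulVec, dotProduct]
          congr 1
          have : dcConj (∑ i, A j i * x i) = ∑ i, dcConj (A j i * x i) := by
            ext <;> simp [fst_sum, snd_sum, dcConj_fst, dcConj_snd]
          rw [this]
      _ = ∑ i, dcConj (x i) * (A i j * y j) := by
          rw [Finset.sum_mul]
          refine Finset.sum_congr rfl fun i _ => ?_
          rw [dcConj_mul, ← hAij]; ring
  rw [h1, h2, Finset.sum_comm]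

/-- Two eigenvectors of a Hermitian dual complex matrix `A`, associated to eigenvalues
`λ` and `μ` with distinct standard parts, are orthogonal: `x* y = 0`. -/
theorem dc_hermitian_eigenvectors_orthogonal {n : ℕ}
    (A : Matrix (Fin n) (Fin n) (DualNumber ℂ)) (hA : dcCT A = A)
    (lam mu : DualNumber ℂ) (x y : Fin n → DualNumber ℂ)
    (hx : (fun i => (x i).fst) ≠ 0) (hy : (fun i => (y i).fst) ≠ 0)
    (hlx : A *ᵥ x = lam • x) (hmy : A *ᵥ y = mu • y)
    (hne : lam.fst ≠ mu.fst) :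
    (fun i => dcConj (x i)) ⬝ᵥ y = 0 := by
  set S := ∑ i, dcConj (x i) * y i with hS
  have hgoal : (fun i => dcConj (x i)) ⬝ᵥ y = S := rfl
  rw [hgoal]
  -- realness of lam.fst
  set N := ∑ i, dcConj (x i) * x i with hN
  have hNfst : N.fst = ((∑ i, Complex.normSq ((x i).fst) : ℝ) : ℂ) := by
    rw [hN, fst_sum]
    push_cast
    refine Finset.sum_congr rfl fun i _ => ?_
    rw [fst_mul]
    simp [dcConj, Complex.normSq_eq_conj_mul_self]
  have hNne : N.fst ≠ 0 := by
    rw [hNfst]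
    have : (0:ℝ) < ∑ i, Complex.normSq ((x i).fst) := by
      obtain ⟨i, hi⟩ : ∃ i, (x i).fst ≠ 0 := by
        by_contra h
        push_neg at h
        exact hx (funext h)
      exact Finset.sum_pos' (fun j _ => Complex.normSq_nonneg _)
        ⟨i, Finset.mem_univ i, Complex.normSq_pos.mpr hi⟩
    exact_mod_cast this.ne'
  have hreal : (starRingEnd ℂ) lam.fst = lam.fst := by
    have h := key_swap A hA lam lam x x hlx hlx
    have h0 : (dcConj lam - lam) * N = 0 := by rw [sub_mul, hN, h]; ring
    have h0f : ((starRingEnd ℂ) lam.fst - lam.fst) * N.fst = 0 := by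
      have := congrArg TrivSqZeroExt.fst h0
      simpa [fst_mul, dcConj_fst, fst_sub] using this
    have := mul_eq_zero.mp h0f
    rcases this with h | h
    · exact sub_eq_zero.mp h
    · exact absurd h hNne
  have h := key_swap A hA lam mu x y hlx hmy
  have h0 : (dcConj lam - mu) * S = 0 := by rw [sub_mul, hS, h]; ring
  set a := dcConj lam - mu with ha
  have haf : a.fst = lam.fst - mu.fst := by
    rw [ha]; simp [dcConj_fst, hreal, fst_sub]
  have hafne : a.fst ≠ 0 := by rw [haf]; exact sub_ne_zero.mpr hne
  have hSfst : S.fst = 0 := by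
    have := congrArg TrivSqZeroExt.fst h0
    rw [fst_mul] at this
    simpa using (mul_eq_zero.mp this).resolve_left hafne
  have hSsnd : S.snd = 0 := by
    have := congrArg TrivSqZeroExt.snd h0
    rw [snd_mul] at this
    simp [hSfst] at this
    rcases this with h | h
    · exact absurd h hafne
    · exact h
  ext <;> simp [hSfst, hSsnd]
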